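/- Let N ≥ 1 and L ≥ 1 be integers and let p_min, q_min be positive reals. Let (p_{n,k})_{1≤n≤N, 1≤k≤L} satisfy p_{n,k} ≥ p_min and ∑_{k=1}^L p_{n,k} = 1 for every n, and let (q_n)_{1≤n≤N} satisfy q_n ≥ q_min for every n. Then ∑_{n=1}^N q_n · ∑_{k=1}^L p_{n,k} · (∑_{m ≠ n} ∑_{l=k}^L p_{m,l}) ≥ N·q_min·(N−1)·( p_min + p_min²·L(L−1)/2 ). -/

import Mathlib

lemma sum_card_Ioi (L : ℕ) (hL : 1 ≤ L) :
    ∑ k : Fin L, ((Finset.Ioi k).card : ℝ) = (L : ℝ) * ((L : ℝ) - 1) / 2 := by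
  have h1 : ∑ k : Fin L, ((Finset.Ioi k).card : ℝ)
      = ∑ k ∈ Finset.range L, ((L - 1 - k : ℕ) : ℝ) := by
    rw [Finset.sum_range fun k => ((L - 1 - k : ℕ) : ℝ)]
    exact Finset.sum_congr rfl fun k _ => by rw [Fin.card_Ioi]
  rw [h1, Finset.sum_range_reflect fun k => ((k : ℕ) : ℝ)]
  have h2 : ((∑ k ∈ Finset.range L, k : ℕ) : ℝ) = (L : ℝ) * ((L : ℝ) - 1) / 2 := by
    have := Finset.sum_range_id_mul_two L
    have hc := congrArg (Nat.cast (R := ℝ)) this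
    push_cast [Nat.cast_sub hL] at hc
    push_cast
    linarith
  rw [← h2]
  push_cast
  rfl

lemma key_pair (L : ℕ) (hL : 1 ≤ L) (pmin : ℝ) (hpmin : 0 < pmin)
    (a b : Fin L → ℝ) (ha : ∀ k, pmin ≤ a k) (hb : ∀ k, pmin ≤ b k)
    (hbsum : ∑ k, b k = 1) :
    pmin + pmin ^ 2 * ((L : ℝ) * ((L : ℝ) - 1) / 2)
      ≤ ∑ k, a k * ∑ l ∈ Finset.Ici k, b l := by
  have hterm : ∀ k : Fin L,
      pmin * b k + pmin ^ 2 * ((Finset.Ioi k).card : ℝ)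
        ≤ a k * ∑ l ∈ Finset.Ici k, b l := by
    intro k
    have hsplit : ∑ l ∈ Finset.Ici k, b l = b k + ∑ l ∈ Finset.Ioi k, b l := by
      rw [← Finset.sum_insert (Finset.notMem_Ioi_self), Finset.Ioi_insert]
    have hIoi : pmin * ((Finset.Ioi k).card : ℝ) ≤ ∑ l ∈ Finset.Ioi k, b l := by
      calc pmin * ((Finset.Ioi k).card : ℝ) = ∑ _l ∈ Finset.Ioi k, pmin := by
            rw [Finset.sum_const, nsmul_eq_mul]; ring
        _ ≤ ∑ l ∈ Finset.Ioi k, b l := Finset.sum_le_sum fun l _ => hb l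
    have hak : pmin ≤ a k := ha k
    have hbk : pmin ≤ b k := hb k
    have hcard : (0 : ℝ) ≤ ((Finset.Ioi k).card : ℝ) := Nat.cast_nonneg _
    rw [hsplit]
    have hS : 0 ≤ ∑ l ∈ Finset.Ioi k, b l := le_trans (mul_nonneg hpmin.le hcard) hIoi
    have h1 : pmin * (b k + ∑ l ∈ Finset.Ioi k, b l) ≤ a k * (b k + ∑ l ∈ Finset.Ioi k, b l) :=
      mul_le_mul_of_nonneg_right hak (by linarith)
    have h2 : pmin * (pmin * ((Finset.Ioi k).card : ℝ)) ≤ pmin * ∑ l ∈ Finset.Ioi k, b l :=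
      mul_le_mul_of_nonneg_left hIoi hpmin.le
    nlinarith [h1, h2]
  calc pmin + pmin ^ 2 * ((L : ℝ) * ((L : ℝ) - 1) / 2)
      = ∑ k : Fin L, (pmin * b k + pmin ^ 2 * ((Finset.Ioi k).card : ℝ)) := by
        rw [Finset.sum_add_distrib, ← Finset.mul_sum, hbsum, ← Finset.mul_sum,
          sum_card_Ioi L hL]
        ring
    _ ≤ ∑ k, a k * ∑ l ∈ Finset.Ici k, b l := Finset.sum_le_sum fun k _ => hterm k

/-- Lower bound on the heterogeneous-channel expected number of non-reporting users:
if `p_{n,k} ≥ p_min` with `∑_k p_{n,k} = 1` for every user `n`, and `q_n ≥ q_min`, then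
`∑_n q_n ∑_k p_{n,k} (∑_{m≠n} ∑_{l=k}^L p_{m,l}) ≥ N·q_min·(N−1)·(p_min + p_min²·L(L−1)/2)`. -/
theorem stmt_10 (N L : ℕ) (hN : 1 ≤ N) (hL : 1 ≤ L)
    (pmin qmin : ℝ) (hpmin : 0 < pmin) (hqmin : 0 < qmin)
    (p : Fin N → Fin L → ℝ) (hp : ∀ n k, pmin ≤ p n k)
    (hpsum : ∀ n, ∑ k, p n k = 1)
    (q : Fin N → ℝ) (hq : ∀ n, qmin ≤ q n) :
    (N : ℝ) * qmin * ((N : ℝ) - 1) * (pmin + pmin ^ 2 * ((L : ℝ) * ((L : ℝ) - 1) / 2))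
      ≤ ∑ n, q n * ∑ k, p n k *
          ∑ m ∈ Finset.univ.erase n, ∑ l ∈ Finset.Ici k, p m l := by
  set C : ℝ := pmin + pmin ^ 2 * ((L : ℝ) * ((L : ℝ) - 1) / 2) with hC
  have hCpos : 0 < C := by
    have hL1 : (1 : ℝ) ≤ (L : ℝ) := by exact_mod_cast hL
    have h0 : (0 : ℝ) ≤ (L : ℝ) * ((L : ℝ) - 1) / 2 := by nlinarith
    have := mul_nonneg (sq_nonneg pmin) h0
    simp only [hC]
    nlinarith
  -- per-user bound
  have hinner : ∀ n : Fin N,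
      ((N : ℝ) - 1) * C ≤ ∑ k, p n k *
          ∑ m ∈ Finset.univ.erase n, ∑ l ∈ Finset.Ici k, p m l := by
    intro n
    have hswap : ∑ k, p n k * ∑ m ∈ Finset.univ.erase n, ∑ l ∈ Finset.Ici k, p m l
        = ∑ m ∈ Finset.univ.erase n, ∑ k, p n k * ∑ l ∈ Finset.Ici k, p m l := by
      simp_rw [Finset.mul_sum]
      rw [Finset.sum_comm]
    rw [hswap]
    calc ((N : ℝ) - 1) * C = ∑ _m ∈ Finset.univ.erase n, C := by
          rw [Finset.sum_const, nsmul_eq_mul, Finset.card_erase_of_mem (Finset.mem_univ n),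
            Finset.card_univ, Fintype.card_fin]
          rw [Nat.cast_sub hN]
          push_cast; ring
      _ ≤ ∑ m ∈ Finset.univ.erase n, ∑ k, p n k * ∑ l ∈ Finset.Ici k, p m l :=
          Finset.sum_le_sum fun m _ =>
            key_pair L hL pmin hpmin (p n) (p m) (hp n) (hp m) (hpsum m)
  calc (N : ℝ) * qmin * ((N : ℝ) - 1) * C = ∑ _n : Fin N, qmin * (((N : ℝ) - 1) * C) := by
        rw [Finset.sum_const, nsmul_eq_mul, Finset.card_univ, Fintype.card_fin]; ring
    _ ≤ ∑ n, q n * ∑ k, p n k * ∑ m ∈ Finset.univ.erase n, ∑ l ∈ Finset.Ici k, p m l := by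
        apply Finset.sum_le_sum
        intro n _
        have h1 := hinner n
        have hN1 : (0 : ℝ) ≤ (N : ℝ) - 1 := by
          have : (1 : ℝ) ≤ (N : ℝ) := by exact_mod_cast hN
          linarith
        have hnn : 0 ≤ ((N : ℝ) - 1) * C := mul_nonneg hN1 hCpos.le
        have := hq n
        nlinarith
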